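/- Let l be an even natural number and ω a real number with ω ≠ 0. Then the limit as ε → 0⁺ of ∫₀¹ u^{ε − 1 + iω} P_l(u) du exists and equals (1/(iω)) · ∏_{k=1}^{l/2} (ω + (2k−1)i)/(ω − 2ki). -/

import Mathlib

open MeasureTheory Filter

noncomputable section

/-- The Legendre polynomial of degree `l`, via Rodrigues' formula. -/
def legendre (l : ℕ) (u : ℝ) : ℝ :=
  (1 / (2 ^ l * (Nat.factorial l : ℝ))) *
    iteratedDeriv l (fun x : ℝ => (x ^ 2 - 1) ^ l) u

namespace Stmt5
open Polynomial

/-- Rodrigues numerator. -/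
def g (n : ℕ) : ℝ[X] := derivative^[n] ((X ^ 2 - 1) ^ n)

lemma g_zero : g 0 = 1 := by simp [g]

lemma C2 : (C (2:ℝ)) = 2 := map_ofNat _ 2

lemma itadd (n : ℕ) (p q : ℝ[X]) :
    derivative^[n] (p + q) = derivative^[n] p + derivative^[n] q := by
  induction n generalizing p q with
  | zero => simp
  | succ n ih => simp [Function.iterate_succ_apply, derivative_add, ih]

lemma iter_deriv_X_mul (n : ℕ) (p : ℝ[X]) :
    derivative^[n + 1] (X * p) =
      X * derivative^[n + 1] p + C ((n : ℝ) + 1) * derivative^[n] p := by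
  induction n generalizing p with
  | zero =>
    simp only [zero_add, Function.iterate_one, Function.iterate_zero_apply, derivative_mul,
      derivative_X, one_mul]
    simp only [map_add, map_one, Nat.cast_zero, map_zero]
    ring
  | succ n ih =>
    rw [Function.iterate_succ_apply, derivative_mul, derivative_X, one_mul, itadd, ih]
    rw [Function.iterate_succ_apply (f := ⇑derivative) (n := n + 1) p,
      Function.iterate_succ_apply (f := ⇑derivative) (n := n) p]
    push_cast
    simp only [map_add, map_mul, map_one, map_pow, map_ofNat, C2]
    ring

lemma iter_deriv_sq_mul (n : ℕ) (p : ℝ[X]) :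
    derivative^[n + 2] ((X ^ 2 - 1) * p) =
      (X ^ 2 - 1) * derivative^[n + 2] p
        + C (2 * ((n : ℝ) + 2)) * (X * derivative^[n + 1] p)
        + C (((n : ℝ) + 2) * ((n : ℝ) + 1)) * derivative^[n] p := by
  have h1 : ∀ q : ℝ[X], derivative ((X ^ 2 - 1 : ℝ[X]) * q)
      = (X ^ 2 - 1) * derivative q + C 2 * (X * q) := by
    intro q
    simp only [derivative_mul, derivative_sub, derivative_one, derivative_X_pow]
    push_cast
    simp only [map_add, map_mul, map_one, map_pow, map_ofNat, C2]
    ring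
  induction n generalizing p with
  | zero =>
    have e2 : ∀ q : ℝ[X], derivative^[0 + 2] q = derivative (derivative q) := fun q => rfl
    have e1 : ∀ q : ℝ[X], derivative^[0 + 1] q = derivative q := fun q => rfl
    rw [e2, e2, e1, Function.iterate_zero_apply, h1, derivative_add, h1, derivative_C_mul,
      derivative_mul, derivative_X, one_mul]
    simp only [map_mul, map_add, map_ofNat, map_one, Nat.cast_zero, map_zero, C2]
    ring
  | succ n ih =>
    rw [show n + 1 + 2 = (n + 2) + 1 from rfl, Function.iterate_succ_apply, h1, itadd, ih,
      show derivative^[n + 2] (C (2:ℝ) * (X * p)) = C 2 * derivative^[n+2] (X * p) from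
        iterate_derivative_C_mul _ _ _,
      show n + 2 = (n + 1) + 1 from rfl, iter_deriv_X_mul (n + 1) p]
    rw [Function.iterate_succ_apply (f := ⇑derivative) (n := n + 1 + 1) p,
      Function.iterate_succ_apply (f := ⇑derivative) (n := n + 1) p,
      Function.iterate_succ_apply (f := ⇑derivative) (n := n) p]
    push_cast
    simp only [map_add, map_mul, map_one, map_pow, map_ofNat, C2]
    ring

lemma hg0 (n : ℕ) : derivative^[n] ((X ^ 2 - 1 : ℝ[X]) ^ n) = g n := rfl

lemma hg1 (n : ℕ) : derivative^[n + 1] ((X ^ 2 - 1 : ℝ[X]) ^ n) = derivative (g n) := by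
  rw [Function.iterate_succ_apply', hg0]

lemma hg2 (n : ℕ) :
    derivative^[n + 2] ((X ^ 2 - 1 : ℝ[X]) ^ n) = derivative (derivative (g n)) := by
  rw [show n + 2 = (n + 1) + 1 from rfl, Function.iterate_succ_apply', hg1]

/-- derivative of g (identity A). -/
lemma deriv_g (n : ℕ) :
    derivative (g (n + 1)) =
      C (2 * ((n : ℝ) + 1)) * (X * derivative (g n) + C ((n : ℝ) + 1) * g n) := by
  have hd : derivative ((X ^ 2 - 1 : ℝ[X]) ^ (n + 1))
      = C (2 * ((n : ℝ) + 1)) * (X * (X ^ 2 - 1) ^ n) := by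
    rw [derivative_pow]
    simp only [derivative_sub, derivative_one, derivative_X_pow, Nat.add_sub_cancel, sub_zero]
    push_cast
    simp only [map_add, map_mul, map_one, map_pow, map_ofNat, C2]
    ring
  have h : derivative (g (n + 1)) = derivative^[n + 2] ((X ^ 2 - 1) ^ (n + 1)) := by
    rw [show n + 2 = (n + 1) + 1 from rfl, Function.iterate_succ_apply', hg0]
  rw [h, show n + 2 = (n + 1) + 1 from rfl, Function.iterate_succ_apply, hd,
    iterate_derivative_C_mul, iter_deriv_X_mul n ((X ^ 2 - 1) ^ n), hg0, hg1]

/-- Legendre ODE at the `g` level (identity B). -/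
lemma ode_g (n : ℕ) :
    (X ^ 2 - 1) * derivative (derivative (g n)) + C 2 * (X * derivative (g n))
      = C ((n : ℝ) * ((n : ℝ) + 1)) * g n := by
  cases n with
  | zero => simp [g_zero]
  | succ m =>
    have key : (X ^ 2 - 1 : ℝ[X]) * derivative ((X ^ 2 - 1) ^ (m + 1))
        = C (2 * ((m : ℝ) + 1)) * (X * (X ^ 2 - 1) ^ (m + 1)) := by
      rw [derivative_pow]
      simp only [derivative_sub, derivative_one, derivative_X_pow, Nat.add_sub_cancel,
        sub_zero]
      push_cast
      simp only [map_add, map_mul, map_one, map_pow, map_ofNat, C2]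
      ring
    have happ := congrArg (fun p : ℝ[X] => derivative^[m + 2] p) key
    rw [iter_deriv_sq_mul m (derivative ((X ^ 2 - 1) ^ (m + 1))),
      show derivative^[m + 2] (derivative ((X ^ 2 - 1 : ℝ[X]) ^ (m + 1)))
          = derivative^[m + 1 + 2] ((X ^ 2 - 1 : ℝ[X]) ^ (m + 1)) by
        rw [← Function.iterate_succ_apply],
      show derivative^[m + 1] (derivative ((X ^ 2 - 1 : ℝ[X]) ^ (m + 1)))
          = derivative^[m + 1 + 1] ((X ^ 2 - 1 : ℝ[X]) ^ (m + 1)) by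
        rw [← Function.iterate_succ_apply],
      show derivative^[m] (derivative ((X ^ 2 - 1 : ℝ[X]) ^ (m + 1)))
          = derivative^[m + 1] ((X ^ 2 - 1 : ℝ[X]) ^ (m + 1)) by
        rw [← Function.iterate_succ_apply],
      hg0, hg1, hg2, iterate_derivative_C_mul,
      show m + 2 = (m + 1) + 1 from rfl, iter_deriv_X_mul (m + 1),
      hg0, hg1] at happ
    push_cast
    push_cast at happ
    simp only [map_add, map_mul, map_one, map_pow, map_ofNat, C2] at happ ⊢
    linear_combination happ

lemma eval_one_g (n : ℕ) : (g n).eval 1 = 2 ^ n * n.factorial := by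
  have hfac : ((X:ℝ[X]) ^ 2 - 1) ^ n = (X - C 1) ^ n * (X + C 1) ^ n := by
    rw [← mul_pow]
    congr 1
    simp only [map_one]
    ring
  rw [g, hfac, iterate_derivative_mul, eval_finset_sum]
  rw [Finset.sum_eq_single 0]
  · simp only [Nat.choose_zero_right, one_smul, Nat.sub_zero, Function.iterate_zero_apply,
      iterate_derivative_X_sub_pow_self, eval_mul, eval_natCast, eval_pow, eval_add, eval_X,
      eval_C]
    norm_num
    ring
  · intro k hk hk0
    have hkn : k ≤ n := Nat.lt_succ_iff.mp (Finset.mem_range.mp hk)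
    rw [iterate_derivative_X_sub_pow]
    have : n - (n - k) = k := Nat.sub_sub_self hkn
    rw [this]
    simp [eval_smul, zero_pow hk0]
  · intro h
    simp at h

/-- Identity C3. -/
lemma g_succ (n : ℕ) :
    g (n + 1) = C (2 * ((n:ℝ) + 1)) * (X * g n) + C 2 * ((X ^ 2 - 1) * derivative (g n)) := by
  set h : ℝ[X] := g (n + 1) - C (2 * ((n:ℝ) + 1)) * (X * g n)
      - C 2 * ((X ^ 2 - 1) * derivative (g n)) with hh
  have hd : derivative h = 0 := by
    have hA := deriv_g n
    have hB := ode_g n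
    rw [hh]
    simp only [derivative_sub, derivative_C_mul, derivative_mul, derivative_C, derivative_X,
      derivative_one, derivative_X_pow, one_mul, zero_mul, add_zero, zero_add]
    push_cast
    push_cast at hA hB
    simp only [map_add, map_mul, map_one, map_pow, map_ofNat, C2] at hA hB ⊢
    linear_combination hA - 2 * hB
  have hC : h = Polynomial.C (h.coeff 0) := (Polynomial.eq_C_of_natDegree_eq_zero
    (Polynomial.natDegree_eq_zero_of_derivative_eq_zero hd))
  have he : h.eval 1 = 0 := by
    rw [hh]
    simp only [eval_sub, eval_mul, eval_C, eval_X, eval_pow, eval_add, eval_one]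
    rw [eval_one_g, eval_one_g]
    rw [Nat.factorial_succ]
    push_cast
    ring
  have h0 : h = 0 := by
    rw [hC] at he ⊢
    simp only [eval_C] at he
    rw [he, map_zero]
  rw [hh] at h0
  linear_combination h0

/-- Identity (2). -/
lemma X_mul_deriv_g (n : ℕ) :
    X * derivative (g (n + 1))
      = C ((n:ℝ) + 1) * g (n + 1) + C (2 * ((n:ℝ) + 1)) * derivative (g n) := by
  have hA := deriv_g n
  have hC := g_succ n
  simp only [map_add, map_mul, map_one, map_pow, map_ofNat, C2] at hA hC ⊢
  linear_combination X * hA - (Polynomial.C (n:ℝ) + 1) * hC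

/-- Main polynomial identity T at the g level. -/
lemma T_g (n : ℕ) :
    X * derivative (g (n + 2))
      = C ((n:ℝ) + 2) * g (n + 2)
        + C (4 * ((n:ℝ) + 1) * ((n:ℝ) + 2)) * (X * derivative (g n))
        + C (4 * ((n:ℝ) + 1) ^ 2 * ((n:ℝ) + 2)) * g n := by
  have h2 := X_mul_deriv_g (n + 1)
  have hA := deriv_g n
  push_cast at h2 hA
  simp only [map_add, map_mul, map_one, map_pow, map_ofNat, C2] at h2 hA ⊢
  linear_combination h2 + (2 * (Polynomial.C (n:ℝ) + 2)) * hA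

/-- The Legendre polynomial. -/
def P (n : ℕ) : ℝ[X] := C (1 / (2 ^ n * n.factorial : ℝ)) * g n

lemma P_zero : P 0 = 1 := by simp [P, g_zero]

lemma eval_P_one (n : ℕ) : (P n).eval 1 = 1 := by
  have : (2 ^ n * n.factorial : ℝ) ≠ 0 := by positivity
  simp [P, eval_one_g]
  field_simp

/-- Main polynomial identity at Legendre level. -/
lemma T_P (n : ℕ) :
    X * derivative (P (n + 2) - P n)
      = C ((n:ℝ) + 2) * P (n + 2) + C ((n:ℝ) + 1) * P n := by
  have hT := T_g n
  have hs : (1 / (2 ^ n * n.factorial : ℝ))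
      = 4 * ((n:ℝ) + 1) * ((n:ℝ) + 2) * (1 / (2 ^ (n + 2) * (n + 2).factorial)) := by
    have h1 : ((n + 2).factorial : ℝ) = ((n:ℝ) + 2) * ((n:ℝ) + 1) * n.factorial := by
      rw [Nat.factorial_succ, Nat.factorial_succ]
      push_cast
      ring
    have h2 : (n.factorial : ℝ) ≠ 0 := by positivity
    rw [h1]
    have h3 : ((n:ℝ) + 2) ≠ 0 := by positivity
    have h4 : ((n:ℝ) + 1) ≠ 0 := by positivity
    field_simp
    ring
  unfold P
  rw [hs]
  simp only [derivative_sub, derivative_C_mul]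
  simp only [map_add, map_mul, map_one, map_pow, map_ofNat, C2] at hT ⊢
  linear_combination (Polynomial.C (1 / (2 ^ (n + 2) * ((n + 2).factorial) : ℝ))) * hT

open MeasureTheory Filter Set intervalIntegral Polynomial


/-- The basic integrand. -/
def E (w : ℂ) (q : ℝ[X]) : ℝ → ℂ :=
  fun u => Complex.exp ((w - 1) * (Real.log u : ℂ)) * ((q.eval u : ℝ) : ℂ)

/-- The Mellin-type integral. -/
def Mee (w : ℂ) (q : ℝ[X]) : ℂ := ∫ u in Ioo (0:ℝ) 1, E w q u

lemma norm_E {w : ℂ} {q : ℝ[X]} {u : ℝ} (hu : 0 < u) :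
    ‖E w q u‖ = u ^ (w.re - 1) * ‖q.eval u‖ := by
  unfold E
  rw [norm_mul, Complex.norm_real]
  congr 1
  have hre : ((w - 1) * (Real.log u : ℂ)).re = (w.re - 1) * Real.log u := by
    simp [Complex.mul_re]
  rw [Complex.norm_exp, hre, Real.rpow_def_of_pos hu, mul_comm]

lemma continuousOn_E (w : ℂ) (q : ℝ[X]) : ContinuousOn (E w q) (Ioc (0:ℝ) 1) := by
  have hlog : ContinuousOn (fun u : ℝ => ((Real.log u : ℝ) : ℂ)) (Ioc (0:ℝ) 1) :=
    Complex.continuous_ofReal.comp_continuousOn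
      (Real.continuousOn_log.mono (fun x hx => by simp [ne_of_gt hx.1]))
  unfold E
  refine ContinuousOn.mul (ContinuousOn.cexp ?_) ?_
  · exact continuousOn_const.mul hlog
  · exact Continuous.continuousOn (Complex.continuous_ofReal.comp q.continuous)

lemma integrableOn_E (w : ℂ) (hw : 0 < w.re) (q : ℝ[X]) :
    IntegrableOn (E w q) (Ioc (0:ℝ) 1) := by
  obtain ⟨Cb, hCb⟩ := (isCompact_Icc (a := (0:ℝ)) (b := 1)).exists_bound_of_continuousOn
    q.continuous.continuousOn
  have hbd : IntegrableOn (fun u : ℝ => Cb * u ^ (w.re - 1)) (Ioc (0:ℝ) 1) := by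
    have h1 : IntervalIntegrable (fun u : ℝ => u ^ (w.re - 1)) volume 0 1 :=
      intervalIntegrable_rpow' (by linarith)
    rw [intervalIntegrable_iff_integrableOn_Ioc_of_le zero_le_one] at h1
    exact h1.const_mul Cb
  refine Integrable.mono' hbd
    ((continuousOn_E w q).aestronglyMeasurable measurableSet_Ioc) ?_
  rw [ae_restrict_iff' measurableSet_Ioc]
  filter_upwards with u hu
  rw [norm_E hu.1, mul_comm]
  have h1 : ‖q.eval u‖ ≤ Cb := hCb u ⟨hu.1.le, hu.2⟩
  have h2 : (0:ℝ) ≤ u ^ (w.re - 1) := Real.rpow_nonneg hu.1.le _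
  exact mul_le_mul_of_nonneg_right h1 h2

lemma integrableOn_E' (w : ℂ) (hw : 0 < w.re) (q : ℝ[X]) :
    IntegrableOn (E w q) (Ioo (0:ℝ) 1) :=
  (integrableOn_E w hw q).mono_set Ioo_subset_Ioc_self

/-- Fundamental identity obtained by integrating an exact derivative. -/
lemma key_identity (w : ℂ) (hw : 0 < w.re) (q : ℝ[X]) :
    w * Mee w q + Mee w (X * derivative q) = ((q.eval 1 : ℝ) : ℂ) := by
  have hw0 : w ≠ 0 := fun h => by simp [h] at hw
  set F : ℝ → ℂ := fun u => (u : ℂ) ^ w * ((q.eval u : ℝ) : ℂ) with hF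
  set f' : ℝ → ℂ := fun u => w * E w q u + E w (X * derivative q) u with hf'
  have hc2 : Continuous fun u : ℝ => ((q.eval u : ℝ) : ℂ) :=
    Complex.continuous_ofReal.comp q.continuous
  have hcont : ContinuousOn F (Icc 0 1) := by
    intro x hx
    rcases eq_or_lt_of_le hx.1 with h0 | h0
    · -- x = 0
      have hF0 : F 0 = 0 := by
        simp [hF, Complex.ofReal_zero, Complex.zero_cpow hw0]
      have hlim : Tendsto (fun u : ℝ => (u : ℂ) ^ w) (nhdsWithin 0 (Icc 0 1)) (nhds 0) := by
        apply squeeze_zero_norm' (a := fun u : ℝ => u ^ w.re)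
        · filter_upwards [eventually_mem_nhdsWithin] with u hu
          rcases eq_or_lt_of_le hu.1 with h1 | h1
          · rw [← h1]
            simp [Complex.zero_cpow hw0, Real.zero_rpow (ne_of_gt hw)]
          · rw [Complex.norm_cpow_eq_rpow_re_of_pos h1]
        · have := (Real.continuousAt_rpow_const 0 w.re (Or.inr hw.le)).tendsto
          rw [Real.zero_rpow (ne_of_gt hw)] at this
          exact this.mono_left nhdsWithin_le_nhds
      have hT : Tendsto F (nhdsWithin 0 (Icc 0 1)) (nhds 0) := by
        have := hlim.mul ((hc2.tendsto 0).mono_left nhdsWithin_le_nhds)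
        rw [zero_mul] at this
        exact this
      rw [← h0]
      unfold ContinuousWithinAt
      rw [hF0]
      exact hT
    · exact (((continuousAt_cpow_const
        (Complex.ofReal_mem_slitPlane.2 h0)).comp
          Complex.continuous_ofReal.continuousAt).mul hc2.continuousAt).continuousWithinAt
  have hderiv : ∀ x ∈ Ioo (0:ℝ) 1, HasDerivWithinAt F (f' x) (Ioi x) x := by
    intro x hx
    have hx0 : (0:ℝ) < x := hx.1
    have hxne : (x:ℂ) ≠ 0 := Complex.ofReal_ne_zero.2 (ne_of_gt hx0)
    have hd1 : HasDerivAt (fun u : ℝ => (u:ℂ) ^ w) (w * (x:ℂ) ^ (w - 1)) x := by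
      have hr : w - 1 ≠ -1 := fun h => hw0 (by linear_combination h)
      have h := (hasDerivAt_ofReal_cpow_const' (ne_of_gt hx0) hr).const_mul w
      rw [show w - 1 + 1 = w by ring] at h
      have hfun : (fun y : ℝ => w * ((y:ℂ) ^ w / w)) = fun y : ℝ => (y:ℂ) ^ w := by
        funext y
        field_simp
      rw [hfun] at h
      exact h
    have hd2 : HasDerivAt (fun u : ℝ => ((q.eval u : ℝ) : ℂ))
        ((q.derivative.eval x : ℝ) : ℂ) x := (q.hasDerivAt x).ofReal_comp
    have hd := hd1.mul hd2
    have hcp : (x:ℂ) ^ (w - 1) = Complex.exp ((w - 1) * (Real.log x : ℂ)) := by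
      rw [Complex.cpow_def_of_ne_zero hxne, ← Complex.ofReal_log hx0.le, mul_comm]
    have hxw : (x:ℂ) ^ w = Complex.exp ((w - 1) * (Real.log x : ℂ)) * (x:ℂ) := by
      have h1 : (x:ℂ) ^ w = (x:ℂ) ^ (w - 1) * (x:ℂ) := by
        calc (x:ℂ) ^ w = (x:ℂ) ^ (w - 1 + 1) := by ring_nf
        _ = (x:ℂ) ^ (w - 1) * (x:ℂ) ^ (1:ℂ) := Complex.cpow_add _ _ hxne
        _ = (x:ℂ) ^ (w - 1) * (x:ℂ) := by rw [Complex.cpow_one]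
      rw [h1, hcp]
    have heq : f' x = w * (x:ℂ) ^ (w - 1) * ((q.eval x : ℝ) : ℂ)
        + (x:ℂ) ^ w * ((q.derivative.eval x : ℝ) : ℂ) := by
      rw [hf']
      simp only [E, eval_mul, eval_X, hxw, hcp]
      push_cast
      ring
    rw [heq]
    exact hd.hasDerivWithinAt
  have hint : IntervalIntegrable f' volume 0 1 := by
    rw [intervalIntegrable_iff_integrableOn_Ioc_of_le zero_le_one]
    exact ((integrableOn_E w hw q).const_mul w).add (integrableOn_E w hw _)
  have hFTC := integral_eq_sub_of_hasDeriv_right_of_le zero_le_one hcont hderiv hint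
  have hF1 : F 1 = ((q.eval 1 : ℝ) : ℂ) := by
    simp [hF, Complex.ofReal_one, Complex.one_cpow]
  have hF0 : F 0 = 0 := by simp [hF, Complex.ofReal_zero, Complex.zero_cpow hw0]
  rw [hF1, hF0, sub_zero, integral_of_le zero_le_one, integral_Ioc_eq_integral_Ioo] at hFTC
  rw [Mee, Mee, ← MeasureTheory.integral_const_mul,
    ← integral_add ((integrableOn_E' w hw q).const_mul w) (integrableOn_E' w hw _)]
  exact hFTC

lemma Mee_zero (w : ℂ) : Mee w 0 = 0 := by simp [Mee, E]

lemma Mee_sub (w : ℂ) (hw : 0 < w.re) (p r : ℝ[X]) :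
    Mee w (p - r) = Mee w p - Mee w r := by
  have h : E w (p - r) = fun u => E w p u - E w r u := by
    funext u
    simp only [E, eval_sub]
    push_cast
    ring
  rw [Mee, h, integral_sub (integrableOn_E' w hw p) (integrableOn_E' w hw r)]
  rfl

lemma Mee_C_mul (w : ℂ) (a : ℝ) (p : ℝ[X]) :
    Mee w (Polynomial.C a * p) = (a : ℂ) * Mee w p := by
  have h : E w (Polynomial.C a * p) = fun u => (a:ℂ) * E w p u := by
    funext u
    simp only [E, eval_mul, eval_C]
    push_cast
    ring
  rw [Mee, h, MeasureTheory.integral_const_mul]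
  rfl

lemma Mee_add (w : ℂ) (hw : 0 < w.re) (p r : ℝ[X]) :
    Mee w (p + r) = Mee w p + Mee w r := by
  have h : E w (p + r) = fun u => E w p u + E w r u := by
    funext u
    simp only [E, eval_add]
    push_cast
    ring
  rw [Mee, h, integral_add (integrableOn_E' w hw p) (integrableOn_E' w hw r)]
  rfl

lemma Mee_base (w : ℂ) (hw : 0 < w.re) : Mee w (P 0) = 1 / w := by
  have hw0 : w ≠ 0 := fun h => by simp [h] at hw
  have h := key_identity w hw 1
  rw [derivative_one, mul_zero, Mee_zero, add_zero] at h
  norm_num at h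
  rw [P_zero, eq_div_iff hw0, mul_comm]
  exact h

lemma Mee_step (w : ℂ) (hw : 0 < w.re) (n : ℕ) :
    (w + ((n:ℂ) + 2)) * Mee w (P (n + 2)) = (w - ((n:ℂ) + 1)) * Mee w (P n) := by
  have hkey := key_identity w hw (P (n + 2) - P n)
  rw [T_P n, Mee_add w hw, Mee_C_mul, Mee_C_mul, Mee_sub w hw] at hkey
  rw [eval_sub, eval_P_one, eval_P_one, sub_self, Complex.ofReal_zero] at hkey
  push_cast at hkey
  linear_combination hkey

lemma Mee_formula (w : ℂ) (hw : 0 < w.re) (m : ℕ) :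
    Mee w (P (2 * m)) = (1 / w) * ∏ k ∈ Finset.Icc 1 m,
      ((w - (2 * (k:ℂ) - 1)) / (w + 2 * (k:ℂ))) := by
  induction m with
  | zero =>
    simp only [Nat.mul_zero, Finset.Icc_eq_empty_of_lt Nat.zero_lt_one, Finset.prod_empty,
      mul_one]
    exact Mee_base w hw
  | succ m ih =>
    have hne : w + (((2 * m : ℕ) : ℂ) + 2) ≠ 0 := by
      intro h
      have h' := congrArg Complex.re h
      have h2 : (0:ℝ) ≤ ((2 * m : ℕ) : ℝ) := Nat.cast_nonneg _
      simp only [Complex.add_re, Complex.natCast_re, Complex.zero_re] at h'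
      norm_num at h'
      linarith
    have hstep := Mee_step w hw (2 * m)
    have h2m : 2 * (m + 1) = 2 * m + 2 := by ring
    rw [h2m]
    have hM : Mee w (P (2 * m + 2))
        = (w - (((2 * m : ℕ):ℂ) + 1)) * Mee w (P (2 * m)) / (w + (((2 * m : ℕ):ℂ) + 2)) := by
      rw [eq_div_iff hne]
      linear_combination hstep
    rw [hM, ih, Finset.prod_Icc_succ_top (Nat.le_add_left 1 m)]
    push_cast
    ring

lemma iteratedDeriv_eval (n : ℕ) : ∀ p : ℝ[X],
    iteratedDeriv n (fun x : ℝ => p.eval x) = fun x => (derivative^[n] p).eval x := by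
  induction n with
  | zero => intro p; simp
  | succ n ih =>
    intro p
    rw [iteratedDeriv_succ']
    have hd : deriv (fun x : ℝ => p.eval x) = fun x => (derivative p).eval x :=
      funext fun x => p.deriv
    rw [hd, ih (derivative p)]
    funext x
    rw [← Function.iterate_succ_apply]

lemma legendre_eq (n : ℕ) (u : ℝ) : legendre n u = (P n).eval u := by
  unfold legendre
  have hfun : (fun x : ℝ => (x ^ 2 - 1) ^ n) = fun x : ℝ => (((X : ℝ[X]) ^ 2 - 1) ^ n).eval x := by
    funext x
    simp
  rw [hfun, iteratedDeriv_eval]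
  simp [P, g]

end Stmt5

theorem stmt5 (l : ℕ) (hl : Even l) (ω : ℝ) (hω : ω ≠ 0) :
    Tendsto (fun ε : ℝ => ∫ u in Set.Ioo (0:ℝ) 1,
        Complex.exp (((ε : ℂ) - 1 + Complex.I * (ω : ℂ)) * (Real.log u : ℂ)) *
          (legendre l u : ℂ))
      (nhdsWithin 0 (Set.Ioi 0))
      (nhds ((1 / (Complex.I * (ω : ℂ))) *
        ∏ k ∈ Finset.Icc 1 (l / 2),
          (((ω : ℂ) + (2 * (k : ℂ) - 1) * Complex.I) /
            ((ω : ℂ) - 2 * (k : ℂ) * Complex.I)))) := by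
  obtain ⟨m, hm⟩ := hl
  have hlm : l = 2 * m := by omega
  subst hlm
  rw [show 2 * m / 2 = m from by omega]
  set w₀ : ℂ := Complex.I * (ω : ℂ) with hw₀
  have hIω : w₀ ≠ 0 := mul_ne_zero Complex.I_ne_zero (Complex.ofReal_ne_zero.2 hω)
  have hre0 : w₀.re = 0 := by
    rw [hw₀]
    simp [Complex.mul_re]
  -- nonvanishing of denominators
  have hd1 : ∀ k : ℕ, k ∈ Finset.Icc 1 m → w₀ + 2 * (k : ℂ) ≠ 0 := by
    intro k hk h
    have hk1 : 1 ≤ k := (Finset.mem_Icc.mp hk).1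
    have h' := congrArg Complex.re h
    simp only [Complex.add_re, Complex.mul_re, Complex.re_ofNat, Complex.natCast_re,
      Complex.im_ofNat, Complex.natCast_im, Complex.zero_re, hre0] at h'
    have hk1' : (1:ℝ) ≤ (k:ℝ) := by exact_mod_cast hk1
    norm_num at h'
    linarith
  -- tendsto of the path
  have hpath : Tendsto (fun ε : ℝ => ((ε : ℂ) + w₀)) (nhdsWithin 0 (Set.Ioi 0)) (nhds w₀) := by
    have h1 : Tendsto (fun ε : ℝ => (ε : ℂ)) (nhds 0) (nhds ((0:ℝ):ℂ)) :=
      Complex.continuous_ofReal.tendsto 0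
    have h2 := (h1.mono_left (nhdsWithin_le_nhds (s := Set.Ioi 0))).add_const w₀
    simpa using h2
  -- limit of the rational function
  have hprod : Tendsto (fun ε : ℝ => (1 / ((ε : ℂ) + w₀)) * ∏ k ∈ Finset.Icc 1 m,
      ((((ε : ℂ) + w₀) - (2 * (k : ℂ) - 1)) / (((ε : ℂ) + w₀) + 2 * (k : ℂ))))
      (nhdsWithin 0 (Set.Ioi 0))
      (nhds ((1 / w₀) * ∏ k ∈ Finset.Icc 1 m,
        ((w₀ - (2 * (k : ℂ) - 1)) / (w₀ + 2 * (k : ℂ))))) := by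
    refine Tendsto.mul (Tendsto.div tendsto_const_nhds hpath hIω) ?_
    refine tendsto_finset_prod _ fun k hk => ?_
    exact Tendsto.div (hpath.sub_const _) (hpath.add_const _) (hd1 k hk)
  -- the functions agree on `Ioi 0`
  have heq : (fun ε : ℝ => ∫ u in Set.Ioo (0:ℝ) 1,
        Complex.exp (((ε : ℂ) - 1 + Complex.I * (ω : ℂ)) * (Real.log u : ℂ)) *
          (legendre (2 * m) u : ℂ))
      =ᶠ[nhdsWithin 0 (Set.Ioi 0)]
      (fun ε : ℝ => (1 / ((ε : ℂ) + w₀)) * ∏ k ∈ Finset.Icc 1 m,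
        ((((ε : ℂ) + w₀) - (2 * (k : ℂ) - 1)) / (((ε : ℂ) + w₀) + 2 * (k : ℂ)))) := by
    filter_upwards [eventually_mem_nhdsWithin] with ε hε
    have hεpos : (0:ℝ) < ε := hε
    have hre : ((ε : ℂ) + w₀).re = ε := by
      simp [Complex.add_re, hre0]
    have hIeq : (∫ u in Set.Ioo (0:ℝ) 1,
        Complex.exp (((ε : ℂ) - 1 + Complex.I * (ω : ℂ)) * (Real.log u : ℂ)) *
          (legendre (2 * m) u : ℂ))
        = Stmt5.Mee ((ε : ℂ) + w₀) (Stmt5.P (2 * m)) := by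
      unfold Stmt5.Mee
      refine integral_congr_ae (Filter.Eventually.of_forall fun u => ?_)
      unfold Stmt5.E
      simp only [Stmt5.legendre_eq]
      have harg : (ε : ℂ) - 1 + Complex.I * (ω : ℂ) = ((ε : ℂ) + w₀) - 1 := by
        rw [hw₀]
        ring
      rw [harg]
    rw [hIeq, Stmt5.Mee_formula _ (by rw [hre]; exact hεpos) m]
  -- identify the limit value
  have hval : (1 / w₀) * ∏ k ∈ Finset.Icc 1 m, ((w₀ - (2 * (k : ℂ) - 1)) / (w₀ + 2 * (k : ℂ)))
      = (1 / (Complex.I * (ω : ℂ))) * ∏ k ∈ Finset.Icc 1 m,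
          (((ω : ℂ) + (2 * (k : ℂ) - 1) * Complex.I) /
            ((ω : ℂ) - 2 * (k : ℂ) * Complex.I)) := by
    rw [hw₀]
    congr 1
    refine Finset.prod_congr rfl fun k hk => ?_
    have hne1 : Complex.I * (ω : ℂ) + 2 * (k : ℂ) ≠ 0 := hd1 k hk
    have hne2 : (ω : ℂ) - 2 * (k : ℂ) * Complex.I ≠ 0 := by
      intro h
      have h' := congrArg Complex.re h
      simp only [Complex.sub_re, Complex.mul_re, Complex.I_re, Complex.I_im,
        Complex.ofReal_re, Complex.ofReal_im, Complex.re_ofNat, Complex.im_ofNat,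
        Complex.natCast_re, Complex.natCast_im, Complex.zero_re] at h'
      norm_num at h'
      exact hω h'
    rw [div_eq_div_iff hne1 hne2]
    linear_combination (-(4 * (k : ℂ) - 1) * (ω : ℂ)) * Complex.I_sq
  rw [← hval]
  exact hprod.congr' heq.symm
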